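/- If G is a right-linear context-free grammar, then for any stack congruence ≡ on R(G) the flattening F_≡ accepts exactly L(G); in particular, the flattening of R(G) itself (obtained with the trivial coarsest congruence, i.e., without any unfolding) accepts exactly L(G), so unfolding does not change the accepted language for right-linear grammars. -/

import Mathlib

/-!
Infrastructure for finite-state approximation of context-free grammars
(Pereira & Wright). We use Mathlib's `ContextFreeGrammar`.

A dotted rule `A → α · β` is represented as `(some A, α, β)`;
the auxiliary dotted rules `S' → · S` and `S' → S ·` are represented with
first component `none`.  States of the LR(0) characteristic machine `M(G)`
are sets of dotted rules (the determinization by the subset construction);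
the transition function `next` is total, with the empty set `∅` playing the
role of "undefined", so genuine transitions are those with nonempty target.
-/

namespace LRApprox

/-- Context-free grammar as in the older Mathlib (`ContextFreeGrammar.{uN,uT}`), whose
type of nonterminals lives in an arbitrary universe. -/
structure CFGrammar.{u, v} (T : Type v) where
  /-- Type of nonterminals. -/
  NT : Type u
  /-- Initial nonterminal. -/
  initial : NT
  /-- Rewrite rules. -/
  rules : Finset (ContextFreeRule T NT)

/-- One step of context-free transformation. -/
def CFGrammar.Produces.{u, v} {T : Type v} (g : CFGrammar.{u, v} T)
    (x y : List (Symbol T g.NT)) : Prop :=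
  ∃ r ∈ g.rules, r.Rewrites x y

/-- Any number of steps of context-free transformation. -/
abbrev CFGrammar.Derives.{u, v} {T : Type v} (g : CFGrammar.{u, v} T) :
    List (Symbol T g.NT) → List (Symbol T g.NT) → Prop :=
  Relation.ReflTransGen g.Produces

/-- The language generated by the grammar. -/
def CFGrammar.language.{u, v} {T : Type v} (g : CFGrammar.{u, v} T) : Language T :=
  { w : List T | g.Derives [Symbol.nonterminal g.initial] (w.map Symbol.terminal) }

universe uN uT

variable {T : Type uT}

/-- A dotted rule `A → α · β`; `none` as first component stands for the
auxiliary start symbol `S'`. -/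
abbrev DottedRule (g : CFGrammar.{uN} T) : Type _ :=
  Option g.NT × List (Symbol T g.NT) × List (Symbol T g.NT)

/-- A state of the characteristic machine `M(G)`: a set of dotted rules. -/
abbrev LRState (g : CFGrammar.{uN} T) : Type _ := Set (DottedRule g)

/-- Closure of a set of dotted rules: whenever `A → α · B β` is present and
`B → γ` is a rule, add `B → · γ`. -/
inductive Closure (g : CFGrammar.{uN} T) (R : Set (DottedRule g)) :
    DottedRule g → Prop
  | base {d : DottedRule g} : d ∈ R → Closure g R d
  | step {A : Option g.NT} {α β : List (Symbol T g.NT)} {B : g.NT}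
      (r : ContextFreeRule T g.NT) :
      Closure g R (A, α, Symbol.nonterminal B :: β) →
      r ∈ g.rules → r.input = B → Closure g R (some B, [], r.output)

/-- The transition function `δ` of `M(G)`: shift the dot over `X` and take the
closure.  The empty set plays the role of "undefined". -/
def next (g : CFGrammar.{uN} T) (s : LRState g) (X : Symbol T g.NT) : LRState g :=
  {d | Closure g {d' | ∃ A α β, (A, α, X :: β) ∈ s ∧ d' = (A, α ++ [X], β)} d}

/-- The start state `s₀` of `M(G)`: the closure of `{S' → · S}`. -/
def start (g : CFGrammar.{uN} T) : LRState g :=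
  {d | Closure g {(none, [], [Symbol.nonterminal g.initial])} d}

/-- The dotted rule `S' → S ·`. -/
def finalDR (g : CFGrammar.{uN} T) : DottedRule g :=
  (none, [Symbol.nonterminal g.initial], [])

/-- A state is final iff it contains `S' → S ·`. -/
def IsFinal (g : CFGrammar.{uN} T) (s : LRState g) : Prop := finalDR g ∈ s

/-- Iterated transition function, extended to strings of symbols. -/
def nextStar (g : CFGrammar.{uN} T) (s : LRState g)
    (α : List (Symbol T g.NT)) : LRState g :=
  α.foldl (next g) s

/-- A stack of the shift-reduce recognizer: a sequence of (state, symbol) pairs. -/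
abbrev Stack (g : CFGrammar.{uN} T) : Type _ :=
  List (LRState g × Symbol T g.NT)

/-- `Stacks g s σ` iff `σ = ⟨q₀,X₀⟩…⟨q_k,X_k⟩` with `q₀ = s₀`,
`q_i = δ(q_{i-1},X_{i-1})` and `s = δ(q_k,X_k)`; in addition `Stacks s₀`
contains the empty sequence. -/
inductive Stacks (g : CFGrammar.{uN} T) : LRState g → Stack g → Prop
  | nil : Stacks g (start g) []
  | snoc {q : LRState g} {σ : Stack g} {X : Symbol T g.NT} :
      Stacks g q σ → next g q X ≠ ∅ → Stacks g (next g q X) (σ ++ [(q, X)])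

/-- A configuration `⟨s, σ, w⟩` of the shift-reduce recognizer `R(G)`. -/
structure Cfg (g : CFGrammar.{uN} T) where
  state : LRState g
  stack : Stack g
  input : List T

/-- A shift move of `R(G)`. -/
inductive ShiftStep (g : CFGrammar.{uN} T) : Cfg g → Cfg g → Prop
  | shift {s : LRState g} {σ : Stack g} {x : T} {w : List T} :
      next g s (Symbol.terminal x) ≠ ∅ →
      ShiftStep g ⟨s, σ, x :: w⟩
        ⟨next g s (Symbol.terminal x), σ ++ [(s, Symbol.terminal x)], w⟩

/-- A reduce move of `R(G)`. -/
inductive ReduceStep (g : CFGrammar.{uN} T) : Cfg g → Cfg g → Prop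
  | empty {s : LRState g} {σ : Stack g} {w : List T} {A : g.NT} :
      (some A, ([] : List (Symbol T g.NT)), ([] : List (Symbol T g.NT))) ∈ s →
      next g s (Symbol.nonterminal A) ≠ ∅ →
      ReduceStep g ⟨s, σ, w⟩
        ⟨next g s (Symbol.nonterminal A), σ ++ [(s, Symbol.nonterminal A)], w⟩
  | pop {s : LRState g} {σ τ : Stack g} {w : List T} {A : g.NT}
      {s₁ : LRState g} {X₁ : Symbol T g.NT} :
      (some A, ((s₁, X₁) :: τ).map Prod.snd, ([] : List (Symbol T g.NT))) ∈ s →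
      next g s₁ (Symbol.nonterminal A) ≠ ∅ →
      ReduceStep g ⟨s, σ ++ (s₁, X₁) :: τ, w⟩
        ⟨next g s₁ (Symbol.nonterminal A), σ ++ [(s₁, Symbol.nonterminal A)], w⟩

/-- A move of the shift-reduce recognizer `R(G)`. -/
def Step (g : CFGrammar.{uN} T) (c c' : Cfg g) : Prop :=
  ShiftStep g c c' ∨ ReduceStep g c c'

/-- `R(G)` accepts `w`: some sequence of moves leads from the initial
configuration `⟨s₀, ε, w⟩` to a final configuration `⟨s, ⟨s₀,S⟩, ε⟩`, `s ∈ F`. -/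
def RAccepts (g : CFGrammar.{uN} T) (w : List T) : Prop :=
  ∃ s : LRState g, IsFinal g s ∧
    Relation.ReflTransGen (Step g) ⟨start g, [], w⟩
      ⟨s, [(start g, Symbol.nonterminal g.initial)], []⟩

/-- A stack congruence on `R(G)`: a family of equivalence relations on
`Stacks(s)`, compatible with pushing. -/
def IsStackCongruence (g : CFGrammar.{uN} T)
    (E : LRState g → Stack g → Stack g → Prop) : Prop :=
  (∀ s σ σ', E s σ σ' → Stacks g s σ ∧ Stacks g s σ') ∧
  (∀ s σ, Stacks g s σ → E s σ σ) ∧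
  (∀ s σ σ', E s σ σ' → E s σ' σ) ∧
  (∀ s σ₁ σ₂ σ₃, E s σ₁ σ₂ → E s σ₂ σ₃ → E s σ₁ σ₃) ∧
  (∀ s X σ σ', next g s X ≠ ∅ → E s σ σ' →
    E (next g s X) (σ ++ [(s, X)]) (σ' ++ [(s, X)]))

/-- A state of the unfolded recognizer `R_≡`: a state of `M(G)` together with
an equivalence class of stacks (represented as a set of stacks). -/
abbrev UState (g : CFGrammar.{uN} T) : Type _ := LRState g × Set (Stack g)

/-- Transition function `δ_≡` of the unfolded recognizer:
`δ_≡(⟨s,[σ]⟩, X) = ⟨δ(s,X), [σ⟨s,X⟩]⟩`. -/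
def uNext (g : CFGrammar.{uN} T) (E : LRState g → Stack g → Stack g → Prop)
    (p : UState g) (X : Symbol T g.NT) : UState g :=
  (next g p.1 X,
   {τ | Stacks g (next g p.1 X) τ ∧ ∃ σ ∈ p.2, E (next g p.1 X) τ (σ ++ [(p.1, X)])})

/-- Start state `⟨s₀, [ε]⟩` of the unfolded recognizer. -/
def uStart (g : CFGrammar.{uN} T)
    (E : LRState g → Stack g → Stack g → Prop) : UState g :=
  (start g, {τ | Stacks g (start g) τ ∧ E (start g) τ []})

/-- Genuine states of the unfolded recognizer: pairs `⟨s, [σ]_s⟩` with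
`σ ∈ Stacks(s)`. -/
def IsUState (g : CFGrammar.{uN} T)
    (E : LRState g → Stack g → Stack g → Prop) (p : UState g) : Prop :=
  ∃ σ, Stacks g p.1 σ ∧ p.2 = {τ | Stacks g p.1 τ ∧ E p.1 τ σ}

/-- Iterated `δ_≡`, extended to strings of symbols. -/
def uNextStar (g : CFGrammar.{uN} T)
    (E : LRState g → Stack g → Stack g → Prop)
    (p : UState g) (α : List (Symbol T g.NT)) : UState g :=
  α.foldl (uNext g E) p

/-- A configuration of the unfolded recognizer `R_≡`. -/
structure UCfg (g : CFGrammar.{uN} T) where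
  state : UState g
  stack : List (UState g × Symbol T g.NT)
  input : List T

/-- A shift move of the unfolded recognizer. -/
inductive UShiftStep (g : CFGrammar.{uN} T)
    (E : LRState g → Stack g → Stack g → Prop) : UCfg g → UCfg g → Prop
  | shift {p : UState g} {σ : List (UState g × Symbol T g.NT)} {x : T} {w : List T} :
      next g p.1 (Symbol.terminal x) ≠ ∅ →
      UShiftStep g E ⟨p, σ, x :: w⟩
        ⟨uNext g E p (Symbol.terminal x), σ ++ [(p, Symbol.terminal x)], w⟩

/-- A reduce move of the unfolded recognizer. -/
inductive UReduceStep (g : CFGrammar.{uN} T)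
    (E : LRState g → Stack g → Stack g → Prop) : UCfg g → UCfg g → Prop
  | empty {p : UState g} {σ : List (UState g × Symbol T g.NT)} {w : List T} {A : g.NT} :
      (some A, ([] : List (Symbol T g.NT)), ([] : List (Symbol T g.NT))) ∈ p.1 →
      next g p.1 (Symbol.nonterminal A) ≠ ∅ →
      UReduceStep g E ⟨p, σ, w⟩
        ⟨uNext g E p (Symbol.nonterminal A), σ ++ [(p, Symbol.nonterminal A)], w⟩
  | pop {p : UState g} {σ τ : List (UState g × Symbol T g.NT)} {w : List T} {A : g.NT}
      {p₁ : UState g} {X₁ : Symbol T g.NT} :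
      (some A, ((p₁, X₁) :: τ).map Prod.snd, ([] : List (Symbol T g.NT))) ∈ p.1 →
      next g p₁.1 (Symbol.nonterminal A) ≠ ∅ →
      UReduceStep g E ⟨p, σ ++ (p₁, X₁) :: τ, w⟩
        ⟨uNext g E p₁ (Symbol.nonterminal A), σ ++ [(p₁, Symbol.nonterminal A)], w⟩

/-- A move of the unfolded recognizer `R_≡`. -/
def UStep (g : CFGrammar.{uN} T)
    (E : LRState g → Stack g → Stack g → Prop) (c c' : UCfg g) : Prop :=
  UShiftStep g E c c' ∨ UReduceStep g E c c'

/-- The unfolded recognizer `R_≡` accepts `w`. -/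
def UAccepts (g : CFGrammar.{uN} T)
    (E : LRState g → Stack g → Stack g → Prop) (w : List T) : Prop :=
  ∃ p : UState g, IsFinal g p.1 ∧
    Relation.ReflTransGen (UStep g E) ⟨uStart g E, [], w⟩
      ⟨p, [(uStart g E, Symbol.nonterminal g.initial)], []⟩

/-- `Pop(p)`: the unfolded states reachable from `p` by a reduction. -/
def PopSet (g : CFGrammar.{uN} T)
    (E : LRState g → Stack g → Stack g → Prop) (p : UState g) : Set (UState g) :=
  {p' | ∃ (A : g.NT) (α : List (Symbol T g.NT)) (p'' : UState g),
    IsUState g E p'' ∧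
    (some A, α, ([] : List (Symbol T g.NT))) ∈ p.1 ∧
    (some A, ([] : List (Symbol T g.NT)), α) ∈ p''.1 ∧
    uNextStar g E p'' α = p ∧
    next g p''.1 (Symbol.nonterminal A) ≠ ∅ ∧
    uNext g E p'' (Symbol.nonterminal A) = p'}

/-- Paths in the flattening `F_≡` of the unfolded recognizer: terminal
transitions follow `δ_≡` and reductions become ε-transitions. -/
inductive FPath (g : CFGrammar.{uN} T)
    (E : LRState g → Stack g → Stack g → Prop) : UState g → List T → UState g → Prop
  | refl (p : UState g) : FPath g E p [] p
  | shift {p : UState g} {x : T} {w : List T} {q : UState g} :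
      next g p.1 (Symbol.terminal x) ≠ ∅ →
      FPath g E (uNext g E p (Symbol.terminal x)) w q → FPath g E p (x :: w) q
  | eps {p p' : UState g} {w : List T} {q : UState g} :
      p' ∈ PopSet g E p → FPath g E p' w q → FPath g E p w q

/-- The flattening `F_≡` accepts `w`. -/
def FAccepts (g : CFGrammar.{uN} T)
    (E : LRState g → Stack g → Stack g → Prop) (w : List T) : Prop :=
  ∃ q : UState g, IsFinal g q.1 ∧ FPath g E (uStart g E) w q

/-- A stack `⟨s₁,X₁⟩…⟨s_k,X_k⟩` is a loop if `δ(s_k,X_k) = s₁`. -/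
def IsLoop (g : CFGrammar.{uN} T) (τ : Stack g) : Prop :=
  ∃ p q : LRState g × Symbol T g.NT,
    τ.head? = some p ∧ τ.getLast? = some q ∧ next g q.1 q.2 = p.1

/-- A loop is minimal if no proper prefix of it is a loop. -/
def IsMinimalLoop (g : CFGrammar.{uN} T) (τ : Stack g) : Prop :=
  IsLoop g τ ∧ ∀ τ' : Stack g, τ' <+: τ → τ' ≠ τ → ¬ IsLoop g τ'

/-- A stack is collapsible if it contains a loop as a contiguous segment. -/
def Collapsible (g : CFGrammar.{uN} T) (σ : Stack g) : Prop :=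
  ∃ ρ τ υ : Stack g, σ = ρ ++ τ ++ υ ∧ IsLoop g τ

/-- `σ` immediately collapses to `σ'`: remove the earliest minimal loop. -/
def ImmediatelyCollapses (g : CFGrammar.{uN} T) (σ σ' : Stack g) : Prop :=
  ∃ ρ τ υ : Stack g, σ = ρ ++ τ ++ υ ∧ σ' = ρ ++ υ ∧ IsMinimalLoop g τ ∧
    ¬ ∃ ρ' τ' υ' : Stack g, σ = ρ' ++ τ' ++ υ' ∧ ρ' <+: ρ ∧ ρ' ≠ ρ ∧ IsLoop g τ'

/-- `σ` collapses to `σ'` by finitely many immediate collapses. -/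
def Collapses (g : CFGrammar.{uN} T) : Stack g → Stack g → Prop :=
  Relation.ReflTransGen (ImmediatelyCollapses g)

/-- Two stacks are collapsing-equivalent if they collapse to the same
uncollapsible stack. -/
def CollEquiv (g : CFGrammar.{uN} T) (σ σ' : Stack g) : Prop :=
  ∃ τ : Stack g, ¬ Collapsible g τ ∧ Collapses g σ τ ∧ Collapses g σ' τ

/-- The collapsing congruence: the restriction of collapsing equivalence to
the sets `Stacks(s)`. -/
def CollCong (g : CFGrammar.{uN} T) (s : LRState g) (σ σ' : Stack g) : Prop :=
  Stacks g s σ ∧ Stacks g s σ' ∧ CollEquiv g σ σ'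

/-- A CFG is left-linear if every rule has the form `A → Bβ` or `A → β`
with `β` a string of terminals. -/
def LeftLinear (g : CFGrammar.{uN} T) : Prop :=
  ∀ r ∈ g.rules, (∃ β : List T, r.output = β.map Symbol.terminal) ∨
    (∃ (B : g.NT) (β : List T), r.output = Symbol.nonterminal B :: β.map Symbol.terminal)

/-- A CFG is right-linear if every rule has the form `A → βB` or `A → β`
with `β` a string of terminals. -/
def RightLinear (g : CFGrammar.{uN} T) : Prop :=
  ∀ r ∈ g.rules, (∃ β : List T, r.output = β.map Symbol.terminal) ∨
    (∃ (B : g.NT) (β : List T), r.output = β.map Symbol.terminal ++ [Symbol.nonterminal B])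

/-- Reachable (genuine) states of `M(G)`. -/
def ReachableState (g : CFGrammar.{uN} T) (s : LRState g) : Prop :=
  s ≠ ∅ ∧ ∃ α : List (Symbol T g.NT), nextStar g (start g) α = s

section Aux
variable {g : CFGrammar.{uN} T}

/-! ### List lemmas -/

lemma nt_not_mem_map_terminal {N : Type uN} {B : N} {c : List T} :
    Symbol.nonterminal B ∉ c.map (Symbol.terminal : T → Symbol T N) := by
  simp [List.mem_map]

lemma eq_terminal_snoc {N : Type uN} :
    ∀ {α β : List (Symbol T N)} {B : N} {c : List T} {x : Symbol T N},
    α ++ Symbol.nonterminal B :: β = c.map Symbol.terminal ++ [x] →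
    α = c.map Symbol.terminal ∧ x = Symbol.nonterminal B ∧ β = [] := by
  intro α
  induction α with
  | nil =>
    intro β B c x h
    cases c with
    | nil =>
      simp at h
      exact ⟨rfl, h.1.symm, h.2⟩
    | cons y c' => simp at h
  | cons a α' ih =>
    intro β B c x h
    cases c with
    | nil =>
      simp at h
    | cons y c' =>
      simp only [List.map_cons, List.cons_append, List.cons.injEq] at h
      obtain ⟨rfl, h2⟩ := h
      obtain ⟨h3, h4, h5⟩ := ih h2
      exact ⟨by simp [h3], h4, h5⟩

lemma terminal_prefix_split {N : Type uN} :
    ∀ {u : List T} {s p q : List (Symbol T N)} {X : N},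
    u.map Symbol.terminal ++ s = p ++ Symbol.nonterminal X :: q →
    ∃ p', p = u.map Symbol.terminal ++ p' ∧ s = p' ++ Symbol.nonterminal X :: q := by
  intro u
  induction u with
  | nil => intro s p q X h; exact ⟨p, rfl, by simpa using h⟩
  | cons a u' ih =>
    intro s p q X h
    cases p with
    | nil => simp at h
    | cons y p'' =>
      simp only [List.map_cons, List.cons_append, List.cons.injEq] at h
      obtain ⟨rfl, h2⟩ := h
      obtain ⟨p', rfl, hs⟩ := ih h2
      exact ⟨p', rfl, hs⟩

lemma map_terminal_ne_nt_cons {N : Type uN} {u : List T} {p q : List (Symbol T N)} {X : N}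
    (h : u.map Symbol.terminal = p ++ Symbol.nonterminal X :: q) : False := by
  have h' : u.map (Symbol.terminal : T → Symbol T N) ++ [] = p ++ Symbol.nonterminal X :: q := by
    simpa using h
  obtain ⟨p', hp', hs⟩ := terminal_prefix_split h'
  exact List.cons_ne_nil _ _ (List.append_eq_nil_iff.mp hs.symm).2

lemma map_terminal_inj {N : Type uN} {a b : List T}
    (h : a.map (Symbol.terminal : T → Symbol T N) = b.map Symbol.terminal) : a = b :=
  List.map_injective_iff.mpr (fun _ _ hx => Symbol.terminal.inj hx) h

lemma map_terminal_append_split {N : Type uN} :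
    ∀ {w β : List T} {v : List (Symbol T N)},
    w.map Symbol.terminal = β.map Symbol.terminal ++ v →
    ∃ w', w = β ++ w' ∧ v = w'.map Symbol.terminal := by
  intro w β
  induction β generalizing w with
  | nil => intro v h; exact ⟨w, rfl, h.symm⟩
  | cons b β' ih =>
    intro v h
    cases w with
    | nil => simp at h
    | cons a w'' =>
      simp only [List.map_cons, List.cons_append, List.cons.injEq] at h
      obtain ⟨h1, h2⟩ := h
      obtain ⟨w', rfl, hv⟩ := ih h2
      exact ⟨w', by simp [Symbol.terminal.inj h1], hv⟩


/-! ### Automaton basics -/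

lemma mem_shift {s : LRState g} {X : Symbol T g.NT} {A : Option g.NT}
    {α β : List (Symbol T g.NT)} (h : (A, α, X :: β) ∈ s) :
    (A, α ++ [X], β) ∈ next g s X :=
  Closure.base ⟨A, α, β, h, rfl⟩

lemma next_ne_empty {s : LRState g} {X : Symbol T g.NT} {d : DottedRule g}
    (h : d ∈ next g s X) : next g s X ≠ ∅ :=
  fun he => by rw [he] at h; exact h

lemma nextStar_append (s : LRState g) (α β : List (Symbol T g.NT)) :
    nextStar g s (α ++ β) = nextStar g (nextStar g s α) β :=
  List.foldl_append

lemma nextStar_cons (s : LRState g) (X : Symbol T g.NT) (α : List (Symbol T g.NT)) :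
    nextStar g s (X :: α) = nextStar g (next g s X) α := rfl

lemma mem_nextStar :
    ∀ (δ : List (Symbol T g.NT)) {s : LRState g} {A : Option g.NT}
      {α β : List (Symbol T g.NT)}, (A, α, δ ++ β) ∈ s →
      (A, α ++ δ, β) ∈ nextStar g s δ := by
  intro δ
  induction δ with
  | nil => intro s A α β h; simpa [nextStar] using h
  | cons X δ' ih =>
    intro s A α β h
    have h2 : (A, α ++ [X], δ' ++ β) ∈ next g s X := mem_shift (by simpa using h)
    have := ih h2
    simpa [nextStar_cons] using this

lemma produces_step {r : ContextFreeRule T g.NT} (hr : r ∈ g.rules) {A : g.NT}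
    (hin : r.input = A) (γ : List (Symbol T g.NT)) :
    g.Produces (γ ++ [Symbol.nonterminal A]) (γ ++ r.output) := by
  refine ⟨r, hr, ?_⟩
  have := ContextFreeRule.rewrites_of_exists_parts r γ []
  rw [hin] at this
  simpa using this

/-! ### The item invariant -/

def ItemOK (g : CFGrammar.{uN} T) (γ : List (Symbol T g.NT)) (d : DottedRule g) :
    Prop :=
  (d = (none, [], [Symbol.nonterminal g.initial]) ∧ γ = []) ∨
  (d = (none, [Symbol.nonterminal g.initial], []) ∧ γ = [Symbol.nonterminal g.initial]) ∨
  (∃ (A : g.NT) (α β : List (Symbol T g.NT)) (r : ContextFreeRule T g.NT)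
      (γ₁ : List (Symbol T g.NT)),
    d = (some A, α, β) ∧ r ∈ g.rules ∧ r.input = A ∧ r.output = α ++ β ∧
    γ = γ₁ ++ α ∧ g.Derives [Symbol.nonterminal g.initial] (γ₁ ++ [Symbol.nonterminal A]))

lemma closure_ok (hg : RightLinear g) {R : Set (DottedRule g)}
    {γ : List (Symbol T g.NT)} (hR : ∀ d ∈ R, ItemOK g γ d) :
    ∀ d, Closure g R d → ItemOK g γ d := by
  intro d hd
  induction hd with
  | base h => exact hR _ h
  | @step A α β B r hcl hr hin ih =>
    rcases ih with ⟨hd, hγ⟩ | ⟨hd, hγ⟩ | ⟨A', α', β', r', γ₁, hd, hr', hin', hout', hγ, hder⟩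
    · -- parent is S' → · S, so B = initial, γ = []
      simp only [Prod.mk.injEq, List.cons.injEq, Symbol.nonterminal.injEq] at hd
      obtain ⟨-, -, hB, -⟩ := hd
      subst hB hγ
      exact Or.inr (Or.inr ⟨_, [], r.output, r, [], rfl, hr, hin, by simp, by simp, by simpa using Relation.ReflTransGen.refl⟩)
    · simp at hd
    · simp only [Prod.mk.injEq] at hd
      obtain ⟨hA, hα, hβ'⟩ := hd
      subst hA hα
      rw [← hβ'] at hout'
      rcases hg r' hr' with ⟨c, hc⟩ | ⟨B', c, hc⟩
      · rw [hc] at hout'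
        exact (map_terminal_ne_nt_cons hout').elim
      · rw [hc] at hout'
        obtain ⟨hαc, hx, hβnil⟩ := eq_terminal_snoc hout'.symm
        obtain rfl := Symbol.nonterminal.inj hx
        subst hβnil
        refine Or.inr (Or.inr ⟨_, [], r.output, r, γ, rfl, hr, hin, by simp, by simp, ?_⟩)
        refine hder.trans (Relation.ReflTransGen.single ?_)
        have h5 := produces_step hr' hin' γ₁
        rw [hc] at h5
        rw [hγ, hαc]
        simpa using h5

lemma items_ok (hg : RightLinear g) :
    ∀ (γ : List (Symbol T g.NT)) (d : DottedRule g),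
      d ∈ nextStar g (start g) γ → ItemOK g γ d := by
  intro γ
  induction γ using List.reverseRecOn with
  | nil =>
    intro d hd
    refine closure_ok hg ?_ d hd
    intro d' hd'
    rw [Set.mem_singleton_iff] at hd'
    exact Or.inl ⟨hd', rfl⟩
  | append_singleton γ X ih =>
    intro d hd
    rw [nextStar_append] at hd
    refine closure_ok hg ?_ d hd
    rintro d' ⟨A, α, β, hmem, rfl⟩
    rcases ih _ hmem with ⟨hd1, hγ⟩ | ⟨hd1, hγ⟩ | ⟨A', α', β', r, γ₁, hd1, hr, hin, hout, hγ, hder⟩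
    · simp only [Prod.mk.injEq, List.cons.injEq] at hd1
      obtain ⟨hA, hα, hX, hβ⟩ := hd1
      subst hA hα hX hβ hγ
      exact Or.inr (Or.inl ⟨rfl, rfl⟩)
    · simp only [Prod.mk.injEq] at hd1
      exact absurd hd1.2.2 (List.cons_ne_nil _ _)
    · simp only [Prod.mk.injEq] at hd1
      obtain ⟨hA, hα, hβ⟩ := hd1
      subst hA hα
      refine Or.inr (Or.inr ⟨A', α ++ [X], β, r, γ₁, rfl, hr, hin, ?_, ?_, hder⟩)
      · rw [hout, ← hβ]; simp
      · rw [hγ]; simp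

/-! ### Third-component-empty states -/

def ThirdEmpty (s : LRState g) : Prop :=
  ∀ A (α β : List (Symbol T g.NT)), (A, α, β) ∈ s → β = []

lemma closure_of_thirdEmpty {R : Set (DottedRule g)}
    (hR : ∀ d ∈ R, d.2.2 = ([] : List (Symbol T g.NT))) {d : DottedRule g}
    (hd : Closure g R d) : d ∈ R := by
  induction hd with
  | base h => exact h
  | step r hcl hr hin ih => exact absurd (hR _ ih) (List.cons_ne_nil _ _)

lemma closure_empty {R : Set (DottedRule g)} (hR : ∀ d, d ∉ R) {d : DottedRule g}
    (hd : Closure g R d) : False := by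
  induction hd with
  | base h => exact hR _ h
  | step r hcl hr hin ih => exact ih

lemma next_empty_of_no_dot {s : LRState g} {X : Symbol T g.NT}
    (h : ∀ (A : Option g.NT) (α β : List (Symbol T g.NT)), (A, α, X :: β) ∉ s) :
    next g s X = ∅ := by
  ext d
  simp only [Set.mem_empty_iff_false, iff_false]
  intro hd
  exact closure_empty (by rintro d' ⟨A, α, β, hmem, rfl⟩; exact h A α β hmem) hd

lemma thirdEmpty_next_nt (hg : RightLinear g) (γ : List (Symbol T g.NT)) (B : g.NT) :
    ThirdEmpty (next g (nextStar g (start g) γ) (Symbol.nonterminal B)) := by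
  have hsh : ∀ d' ∈ {d' | ∃ A α β, (A, α, Symbol.nonterminal B :: β) ∈ nextStar g (start g) γ ∧
      d' = (A, α ++ [Symbol.nonterminal B], β)}, d'.2.2 = ([] : List (Symbol T g.NT)) := by
    rintro d' ⟨A, α, β, hmem, rfl⟩
    rcases items_ok hg γ _ hmem with ⟨hd1, -⟩ | ⟨hd1, -⟩ |
        ⟨A', α', β', r, γ₁, hd1, hr, hin, hout, -, -⟩
    · simp only [Prod.mk.injEq, List.cons.injEq] at hd1
      exact hd1.2.2.2
    · simp only [Prod.mk.injEq] at hd1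
      exact absurd hd1.2.2 (List.cons_ne_nil _ _)
    · simp only [Prod.mk.injEq] at hd1
      obtain ⟨hA, hα, hβ⟩ := hd1
      have hout2 : r.output = α ++ Symbol.nonterminal B :: β := by
        rw [hout, ← hα, ← hβ]
      rcases hg r hr with ⟨c, hc⟩ | ⟨B', c, hc⟩
      · exact (map_terminal_ne_nt_cons (hout2.symm.trans hc).symm).elim
      · exact (eq_terminal_snoc (hout2.symm.trans hc)).2.2
  intro A α β hd
  have := closure_of_thirdEmpty hsh hd
  obtain ⟨A', α', β', hmem, heq⟩ := this
  simp only [Prod.mk.injEq] at heq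
  exact hsh _ ⟨A', α', β', hmem, rfl⟩ ▸ heq.2.2 ▸ rfl

lemma stacks_nextStar {s : LRState g} {σ : Stack g} (h : Stacks g s σ) :
    s = nextStar g (start g) (σ.map Prod.snd) := by
  induction h with
  | nil => rfl
  | @snoc q σ X hst hne ih => rw [List.map_append, nextStar_append, ← ih]; rfl

variable {E : LRState g → Stack g → Stack g → Prop}

lemma uNextStar_fst :
    ∀ (γ : List (Symbol T g.NT)) (p : UState g),
      (uNextStar g E p γ).1 = nextStar g p.1 γ := by
  intro γ
  induction γ with
  | nil => intro p; rfl
  | cons X γ' ih => intro p; exact ih (uNext g E p X)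

lemma uNextStar_append (p : UState g) (α β : List (Symbol T g.NT)) :
    uNextStar g E p (α ++ β) = uNextStar g E (uNextStar g E p α) β :=
  List.foldl_append

/-! ### Soundness -/

lemma fpath_no_input (hg : RightLinear g) :
    ∀ {p : UState g} {w : List T} {q : UState g}, FPath g E p w q → ThirdEmpty p.1 → w = [] := by
  intro p w q h
  induction h with
  | refl p => intro _; rfl
  | @shift p x w q hne hrest ih =>
    intro hte
    exfalso
    apply hne
    apply next_empty_of_no_dot
    intro A α β hmem
    exact absurd (hte A α _ hmem) (List.cons_ne_nil _ _)
  | @eps p p' w q hpop hrest ih =>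
    intro hte
    obtain ⟨A, α, p'', ⟨σ, hst, -⟩, -, -, -, -, hp'⟩ := hpop
    apply ih
    rw [← hp']
    show ThirdEmpty (next g p''.1 (Symbol.nonterminal A))
    rw [stacks_nextStar hst]
    exact thirdEmpty_next_nt hg _ _

lemma sound_aux (hg : RightLinear g) :
    ∀ {p : UState g} {w : List T} {q : UState g}, FPath g E p w q →
    ∀ u : List T, p.1 = nextStar g (start g) (u.map Symbol.terminal) →
    finalDR g ∈ q.1 →
    g.Derives [Symbol.nonterminal g.initial] ((u ++ w).map Symbol.terminal) := by
  intro p w q h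
  induction h with
  | refl p =>
    intro u hp hfin
    rw [hp] at hfin
    rcases items_ok hg _ _ hfin with ⟨hd1, hγ⟩ | ⟨hd1, hγ⟩ |
        ⟨A', α', β', r, γ₁, hd1, -, -, -, -, -⟩
    · simp [finalDR] at hd1
    · cases u with
      | nil => simp at hγ
      | cons a u' => simp at hγ
    · simp [finalDR] at hd1
  | @shift p x w' q hne hrest ih =>
    intro u hp hfin
    have h3 : (uNext g E p (Symbol.terminal x)).1 =
        nextStar g (start g) ((u ++ [x]).map Symbol.terminal) := by
      rw [List.map_append, nextStar_append, ← hp]; rfl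
    have := ih (u ++ [x]) h3 hfin
    simpa using this
  | @eps p p' w' q hpop hrest ih =>
    intro u hp hfin
    obtain ⟨A, α, p'', hIsU, hcomp, hinit, hstar, hne, hp'⟩ := hpop
    rw [hp] at hcomp
    rcases items_ok hg _ _ hcomp with ⟨hd1, -⟩ | ⟨hd1, -⟩ |
        ⟨A', α', β', r, γ₁, hd1, hr, hin, hout, hγ, hder⟩
    · simp at hd1
    · simp at hd1
    · simp only [Prod.mk.injEq, Option.some.injEq] at hd1
      obtain ⟨hA, hα, hβ⟩ := hd1
      have hw' : w' = [] := by
        obtain ⟨σ, hst, -⟩ := hIsU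
        apply fpath_no_input hg hrest
        rw [← hp']
        show ThirdEmpty (next g p''.1 (Symbol.nonterminal A))
        rw [stacks_nextStar hst]
        exact thirdEmpty_next_nt hg _ _
      subst hw'
      subst hA hα
      obtain rfl := hβ.symm
      have hder2 : g.Derives [Symbol.nonterminal g.initial] (u.map Symbol.terminal) := by
        refine hder.trans (Relation.ReflTransGen.single ?_)
        have h5 := produces_step hr hin γ₁
        rw [hout] at h5
        rw [hγ]
        simpa using h5
      simpa using hder2

lemma flattening_sound (hg : RightLinear g) (w : List T) :
    FAccepts g E w → w ∈ g.language := by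
  rintro ⟨q, hfin, hpath⟩
  show g.Derives [Symbol.nonterminal g.initial] (w.map Symbol.terminal)
  have h0 : (uStart g E).1 = nextStar g (start g) (([] : List T).map Symbol.terminal) := rfl
  simpa using sound_aux hg hpath [] h0 hfin

/-! ### Counted derivations and linear derivations -/

inductive DerIn (g : CFGrammar.{uN} T) :
    ℕ → List (Symbol T g.NT) → List (Symbol T g.NT) → Prop
  | refl (u : List (Symbol T g.NT)) : DerIn g 0 u u
  | head {n : ℕ} {u v w : List (Symbol T g.NT)} :
      g.Produces u v → DerIn g n v w → DerIn g (n + 1) u w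

lemma derives_derIn {u v : List (Symbol T g.NT)} (h : g.Derives u v) :
    ∃ n, DerIn g n u v := by
  induction h using Relation.ReflTransGen.head_induction_on with
  | refl => exact ⟨0, DerIn.refl _⟩
  | head hp _ ih => obtain ⟨n, hn⟩ := ih; exact ⟨n + 1, DerIn.head hp hn⟩

lemma derIn_terminal_fixed {n : ℕ} {u : List T} {v : List (Symbol T g.NT)}
    (h : DerIn g n (u.map Symbol.terminal) v) : v = u.map Symbol.terminal := by
  cases h with
  | refl => rfl
  | head hp h' =>
    obtain ⟨r, hr, hrw⟩ := hp
    obtain ⟨p, q, hu, -⟩ := hrw.exists_parts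
    exact (map_terminal_ne_nt_cons (by simpa using hu)).elim

lemma derIn_prefix :
    ∀ {n : ℕ} {u : List T} {s v : List (Symbol T g.NT)},
    DerIn g n (u.map Symbol.terminal ++ s) v →
    ∃ v', v = u.map Symbol.terminal ++ v' ∧ DerIn g n s v' := by
  intro n
  induction n with
  | zero =>
    intro u s v h
    cases h
    exact ⟨s, rfl, DerIn.refl _⟩
  | succ m ih =>
    intro u s v h
    cases h with
    | head hp h' =>
      obtain ⟨r, hr, hrw⟩ := hp
      obtain ⟨p, q, hu, hv⟩ := hrw.exists_parts
      obtain ⟨p', hpp, hs⟩ := terminal_prefix_split (by simpa using hu)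
      have hmid : p ++ r.output ++ q = u.map Symbol.terminal ++ (p' ++ r.output ++ q) := by
        rw [hpp]; simp
      rw [hv, hmid] at h'
      obtain ⟨v', rfl, h''⟩ := ih h'
      refine ⟨v', rfl, DerIn.head ⟨r, hr, ?_⟩ h''⟩
      rw [hs]
      have := ContextFreeRule.rewrites_of_exists_parts r p' q
      simpa using this

inductive Lin (g : CFGrammar.{uN} T) : g.NT → List T → Prop
  | base {A : g.NT} {β : List T} (r : ContextFreeRule T g.NT) (hr : r ∈ g.rules)
      (hin : r.input = A) (hout : r.output = β.map Symbol.terminal) : Lin g A β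
  | step {A B : g.NT} {β w : List T} (r : ContextFreeRule T g.NT) (hr : r ∈ g.rules)
      (hin : r.input = A)
      (hout : r.output = β.map Symbol.terminal ++ [Symbol.nonterminal B])
      (h : Lin g B w) : Lin g A (β ++ w)

lemma derIn_lin (hg : RightLinear g) :
    ∀ n {A : g.NT} {w : List T},
    DerIn g n [Symbol.nonterminal A] (w.map Symbol.terminal) → Lin g A w := by
  intro n
  induction n using Nat.strong_induction_on with
  | _ n ih =>
    intro A w h
    generalize hv : w.map Symbol.terminal = vv at h
    cases h with
    | refl =>
      exact (map_terminal_ne_nt_cons (N := g.NT) (X := A) (u := w) (p := []) (q := []) (by simpa using hv)).elim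
    | @head m u0 v0 w0 hp h' =>
      subst hv
      obtain ⟨r, hr, hrw⟩ := hp
      obtain ⟨p, q, hu, hv⟩ := hrw.exists_parts
      have hpq : p = [] ∧ r.input = A ∧ q = [] := by
        cases p with
        | nil =>
          simp only [List.nil_append, List.singleton_append, List.cons.injEq,
            Symbol.nonterminal.injEq] at hu
          exact ⟨rfl, hu.1.symm, hu.2.symm⟩
        | cons y p' => simp at hu
      obtain ⟨rfl, hin, rfl⟩ := hpq
      have hv0 : v0 = r.output := by simpa using hv
      subst hv0
      rcases hg r hr with ⟨c, hc⟩ | ⟨B, c, hc⟩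
      · rw [hc] at h'
        have := derIn_terminal_fixed h'
        obtain rfl := map_terminal_inj this.symm
        exact Lin.base r hr hin hc
      · rw [hc] at h'
        obtain ⟨v', hv', h''⟩ := derIn_prefix h'
        obtain ⟨w', rfl, rfl⟩ := map_terminal_append_split hv'
        exact Lin.step r hr hin hc (ih m (Nat.lt_succ_self m) h'')

/-! ### Completeness -/

lemma cc_start : ∀ (A : Option g.NT) (α : List (Symbol T g.NT)) (B : g.NT)
    (β : List (Symbol T g.NT)) (r : ContextFreeRule T g.NT),
    (A, α, Symbol.nonterminal B :: β) ∈ start g → r ∈ g.rules → r.input = B →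
    ((some B : Option g.NT), ([] : List (Symbol T g.NT)), r.output) ∈ start g :=
  fun _ _ _ _ r h hr hin => Closure.step r h hr hin

def CC (g : CFGrammar.{uN} T) (s : LRState g) : Prop :=
  ∀ (A : Option g.NT) (α : List (Symbol T g.NT)) (B : g.NT)
    (β : List (Symbol T g.NT)) (r : ContextFreeRule T g.NT),
    (A, α, Symbol.nonterminal B :: β) ∈ s → r ∈ g.rules → r.input = B →
    ((some B : Option g.NT), ([] : List (Symbol T g.NT)), r.output) ∈ s

lemma ccStart : CC g (start g) := fun _ _ _ _ r h hr hin => Closure.step r h hr hin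

lemma cc_next (s : LRState g) (X : Symbol T g.NT) : CC g (next g s X) :=
  fun _ _ _ _ r h hr hin => Closure.step r h hr hin

lemma isUState_uStart : IsUState g E (uStart g E) := ⟨[], Stacks.nil, rfl⟩

lemma isUState_uNext (hE : IsStackCongruence g E) {p : UState g} {X : Symbol T g.NT}
    (hp : IsUState g E p) (hne : next g p.1 X ≠ ∅) : IsUState g E (uNext g E p X) := by
  obtain ⟨hmem, hrfl, hsymm, htrans, hpush⟩ := hE
  obtain ⟨σ, hσ, hclass⟩ := hp
  refine ⟨σ ++ [(p.1, X)], Stacks.snoc hσ hne, ?_⟩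
  show {τ | Stacks g (next g p.1 X) τ ∧
      ∃ σ₀ ∈ p.2, E (next g p.1 X) τ (σ₀ ++ [(p.1, X)])} = _
  ext τ
  simp only [Set.mem_setOf_eq]
  constructor
  · rintro ⟨hτ, σ₀, hσ₀, hEτ⟩
    rw [hclass] at hσ₀
    exact ⟨hτ, htrans _ _ _ _ hEτ (hpush _ _ _ _ hne hσ₀.2)⟩
  · rintro ⟨hτ, hEτ⟩
    refine ⟨hτ, σ, ?_, hEτ⟩
    rw [hclass]
    exact ⟨hσ, hrfl _ _ hσ⟩

lemma shift_all (hE : IsStackCongruence g E) :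
    ∀ (v : List T) (p : UState g) (A : Option g.NT) (α δ : List (Symbol T g.NT)),
      (A, α, v.map Symbol.terminal ++ δ) ∈ p.1 → IsUState g E p → CC g p.1 →
      IsUState g E (uNextStar g E p (v.map Symbol.terminal)) ∧
      CC g (uNextStar g E p (v.map Symbol.terminal)).1 ∧
      (A, α ++ v.map Symbol.terminal, δ) ∈ (uNextStar g E p (v.map Symbol.terminal)).1 ∧
      ∀ (w₂ : List T) (q : UState g),
        FPath g E (uNextStar g E p (v.map Symbol.terminal)) w₂ q →
        FPath g E p (v ++ w₂) q := by
  intro v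
  induction v with
  | nil =>
    intro p A α δ h hU hC
    exact ⟨hU, hC, by simpa [uNextStar] using h, fun w₂ q hq => hq⟩
  | cons x v' ih =>
    intro p A α δ h hU hC
    have h0 : (A, α, Symbol.terminal x :: (v'.map Symbol.terminal ++ δ)) ∈ p.1 := by
      simpa using h
    have h1 : (A, α ++ [Symbol.terminal x], v'.map Symbol.terminal ++ δ) ∈
        next g p.1 (Symbol.terminal x) := mem_shift h0
    have hne := next_ne_empty h1
    have hU' := isUState_uNext hE hU hne
    have hC' : CC g (uNext g E p (Symbol.terminal x)).1 := cc_next _ _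
    obtain ⟨hU2, hC2, hmem2, hcont⟩ :=
      ih (uNext g E p (Symbol.terminal x)) A (α ++ [Symbol.terminal x]) δ h1 hU' hC'
    refine ⟨hU2, hC2, by simpa [uNextStar, List.append_assoc] using hmem2, ?_⟩
    intro w₂ q hq
    exact FPath.shift hne (hcont w₂ q hq)

lemma fpath_snoc_eps {p q q' : UState g} {w : List T}
    (h : FPath g E p w q) (h' : q' ∈ PopSet g E q) : FPath g E p w q' := by
  induction h with
  | refl p => exact FPath.eps h' (FPath.refl _)
  | shift hne _ ih => exact FPath.shift hne (ih h')
  | eps hpop _ ih => exact FPath.eps hpop (ih h')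

lemma lin_fpath (hE : IsStackCongruence g E) :
    ∀ {A : g.NT} {w : List T}, Lin g A w →
    ∀ p : UState g, IsUState g E p → CC g p.1 →
    (∀ r : ContextFreeRule T g.NT, r ∈ g.rules → r.input = A →
      ((some A : Option g.NT), ([] : List (Symbol T g.NT)), r.output) ∈ p.1) →
    (∃ (C : Option g.NT) (δ δ' : List (Symbol T g.NT)),
      (C, δ, Symbol.nonterminal A :: δ') ∈ p.1) →
    FPath g E p w (uNext g E p (Symbol.nonterminal A)) := by
  intro A w h
  induction h with
  | @base A β r hr hin hout =>
    intro p hU hC hrules hparent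
    have hitem : ((some A : Option g.NT), ([] : List (Symbol T g.NT)),
        β.map Symbol.terminal) ∈ p.1 := hout ▸ hrules r hr hin
    have hitem' : ((some A : Option g.NT), ([] : List (Symbol T g.NT)),
        β.map Symbol.terminal ++ []) ∈ p.1 := by simpa using hitem
    obtain ⟨hU2, hC2, hmem2, hcont⟩ := shift_all hE β p (some A) [] [] hitem' hU hC
    obtain ⟨C, δ, δ', hpar⟩ := hparent
    have hne : next g p.1 (Symbol.nonterminal A) ≠ ∅ := next_ne_empty (mem_shift hpar)
    have hpop : uNext g E p (Symbol.nonterminal A) ∈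
        PopSet g E (uNextStar g E p (β.map Symbol.terminal)) :=
      ⟨A, β.map Symbol.terminal, p, hU, by simpa using hmem2, hitem, rfl, hne, rfl⟩
    have := hcont [] _ (FPath.eps hpop (FPath.refl _))
    simpa using this
  | @step A B β w' r hr hin hout hlin ih =>
    intro p hU hC hrules hparent
    have hitem : ((some A : Option g.NT), ([] : List (Symbol T g.NT)),
        β.map Symbol.terminal ++ [Symbol.nonterminal B]) ∈ p.1 := hout ▸ hrules r hr hin
    obtain ⟨hU2, hC2, hmem2, hcont⟩ :=
      shift_all hE β p (some A) [] [Symbol.nonterminal B] hitem hU hC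
    have hmem2' : ((some A : Option g.NT), β.map Symbol.terminal,
        [Symbol.nonterminal B]) ∈ (uNextStar g E p (β.map Symbol.terminal)).1 := by
      simpa using hmem2
    have hrulesB : ∀ r' : ContextFreeRule T g.NT, r' ∈ g.rules → r'.input = B →
        ((some B : Option g.NT), ([] : List (Symbol T g.NT)), r'.output) ∈
          (uNextStar g E p (β.map Symbol.terminal)).1 :=
      fun r' hr' hin' => hC2 _ _ _ _ r' hmem2' hr' hin'
    have hfp := ih (uNextStar g E p (β.map Symbol.terminal)) hU2 hC2 hrulesB
      ⟨some A, β.map Symbol.terminal, [], hmem2'⟩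
    obtain ⟨C, δ, δ', hpar⟩ := hparent
    have hne : next g p.1 (Symbol.nonterminal A) ≠ ∅ := next_ne_empty (mem_shift hpar)
    have hcomp : ((some A : Option g.NT),
        β.map Symbol.terminal ++ [Symbol.nonterminal B], ([] : List (Symbol T g.NT))) ∈
        (uNext g E (uNextStar g E p (β.map Symbol.terminal)) (Symbol.nonterminal B)).1 :=
      mem_shift hmem2'
    have hstar : uNextStar g E p (β.map Symbol.terminal ++ [Symbol.nonterminal B]) =
        uNext g E (uNextStar g E p (β.map Symbol.terminal)) (Symbol.nonterminal B) := by
      rw [uNextStar_append]; rfl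
    have hpop : uNext g E p (Symbol.nonterminal A) ∈
        PopSet g E (uNext g E (uNextStar g E p (β.map Symbol.terminal))
          (Symbol.nonterminal B)) :=
      ⟨A, β.map Symbol.terminal ++ [Symbol.nonterminal B], p, hU, hcomp, hitem, hstar,
        hne, rfl⟩
    have := hcont w' _ (fpath_snoc_eps hfp hpop)
    exact this

lemma flattening_complete (hE : IsStackCongruence g E) (hg : RightLinear g) {w : List T}
    (hw : w ∈ g.language) : FAccepts g E w := by
  change g.Derives [Symbol.nonterminal g.initial] (w.map Symbol.terminal) at hw
  obtain ⟨n, hn⟩ := derives_derIn hw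
  have hlin := derIn_lin hg n hn
  have hstart_item : ∀ r : ContextFreeRule T g.NT, r ∈ g.rules → r.input = g.initial →
      ((some g.initial : Option g.NT), ([] : List (Symbol T g.NT)), r.output) ∈
        (uStart g E).1 :=
    fun r hr hin => Closure.step r (Closure.base rfl) hr hin
  have hparent : ∃ (C : Option g.NT) (δ δ' : List (Symbol T g.NT)),
      (C, δ, Symbol.nonterminal g.initial :: δ') ∈ (uStart g E).1 :=
    ⟨none, [], [], Closure.base rfl⟩
  have hfp := lin_fpath hE hlin (uStart g E) isUState_uStart ccStart hstart_item hparent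
  refine ⟨uNext g E (uStart g E) (Symbol.nonterminal g.initial), ?_, hfp⟩
  show finalDR g ∈ next g (start g) (Symbol.nonterminal g.initial)
  have := mem_shift (s := start g) (X := Symbol.nonterminal g.initial)
    (Closure.base rfl :
      ((none : Option g.NT), ([] : List (Symbol T g.NT)),
        [Symbol.nonterminal g.initial]) ∈ start g)
  simpa [finalDR] using this

end Aux

end LRApprox

open LRApprox

/-- For a right-linear CFG `G`, for any stack congruence `≡`
on `R(G)` the flattening `F_≡` accepts exactly `L(G)`; in particular the
flattening of `R(G)` itself (the trivial coarsest congruence, i.e. no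
unfolding) accepts exactly `L(G)`. -/
theorem right_linear_flattening_exact {T : Type*} (g : CFGrammar T)
    (hg : RightLinear g) :
    (∀ E : LRState g → Stack g → Stack g → Prop, IsStackCongruence g E →
      ∀ w : List T, FAccepts g E w ↔ w ∈ g.language) ∧
    (∀ w : List T,
      FAccepts g (fun s σ σ' => Stacks g s σ ∧ Stacks g s σ') w ↔
        w ∈ g.language) := by
  have htriv : IsStackCongruence g (fun s σ σ' => Stacks g s σ ∧ Stacks g s σ') :=
    ⟨fun _ _ _ h => h, fun _ _ h => ⟨h, h⟩, fun _ _ _ h => ⟨h.2, h.1⟩,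
      fun _ _ _ _ h1 h2 => ⟨h1.1, h2.2⟩,
      fun _ _ _ _ hne h => ⟨Stacks.snoc h.1 hne, Stacks.snoc h.2 hne⟩⟩
  refine ⟨fun E hE w => ⟨flattening_sound hg w, flattening_complete hE hg⟩,
    fun w => ⟨flattening_sound hg w, flattening_complete htriv hg⟩⟩
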